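/- Let T = σ * θ̊ * τ̇ be a Morse tile, written in its unique decomposition as the join of a closed simplex σ, an open simplex θ̊ and a closed simplex τ of non-vanishing dimension deprived of its empty face. Then for every vertex v of the underlying simplex σ * θ * τ, the map λ ∈ lk_T(v) ↦ v * λ ∈ st_T(v) induces an isomorphism of relative simplicial complexes sd(lk_T(v)) → lk_{sd(T)}(v̂). -/

import Mathlib

/-!
Common combinatorial framework for Morse shellings of simplicial complexes,
following J.-Y. Welschinger, "Morse shellings out of discrete Morse functions".
-/

namespace MorseShelling

variable {V : Type*} [DecidableEq V] {W : Type*} [DecidableEq W]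

/-- A (finite, combinatorial) simplicial complex: a downward-closed collection of
finite subsets (simplices) of the vertex type. -/
def IsComplex (K : Finset (Finset V)) : Prop :=
  ∀ σ ∈ K, ∀ τ ⊆ σ, τ ∈ K

/-- A relative simplicial complex `S = K \ L`, recorded as the pair `(K, L)`. -/
structure RelCplx (V : Type*) where
  K : Finset (Finset V)
  L : Finset (Finset V)

/-- The faces of a relative simplicial complex. -/
def RelCplx.faces (S : RelCplx V) : Finset (Finset V) := S.K \ S.L

/-- Validity of a relative simplicial complex: both members are complexes and
`L` is a subcomplex of `K`. -/
def RelCplx.IsValid (S : RelCplx V) : Prop :=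
  IsComplex S.K ∧ IsComplex S.L ∧ S.L ⊆ S.K

/-- Join of two collections of faces (on disjoint vertex supports). -/
def joinF (K₁ K₂ : Finset (Finset V)) : Finset (Finset V) :=
  (K₁ ×ˢ K₂).image fun p => p.1 ∪ p.2

/-- Join of two relative simplicial complexes:
`(K₁ * K₂) \ ((L₁ * K₂) ∪ (K₁ * L₂))`. -/
def RelCplx.join (S₁ S₂ : RelCplx V) : RelCplx V :=
  ⟨joinF S₁.K S₂.K, joinF S₁.L S₂.K ∪ joinF S₁.K S₂.L⟩

/-- The star of a simplex `σ` in `K` : all faces `τ` with `σ ∪ τ ∈ K`. -/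
def star (K : Finset (Finset V)) (σ : Finset V) : Finset (Finset V) :=
  K.filter fun τ => σ ∪ τ ∈ K

/-- The link of a simplex `σ` in `K` : all faces `τ` of the star disjoint from `σ`. -/
def link (K : Finset (Finset V)) (σ : Finset V) : Finset (Finset V) :=
  K.filter fun τ => σ ∪ τ ∈ K ∧ σ ∩ τ = ∅

/-- The star of a simplex in a relative complex, `st_S(σ) = st_K(σ) \ st_L(σ)`. -/
def RelCplx.starR (S : RelCplx V) (σ : Finset V) : RelCplx V :=
  ⟨star S.K σ, star S.L σ⟩

/-- The link of a simplex in a relative complex, `lk_S(σ) = lk_K(σ) \ lk_L(σ)`. -/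
def RelCplx.linkR (S : RelCplx V) (σ : Finset V) : RelCplx V :=
  ⟨link S.K σ, link S.L σ⟩

/-- The boundary complex of a simplex: all its proper faces (including `∅`). -/
def boundary (σ : Finset V) : Finset (Finset V) := σ.powerset.erase σ

/-- First barycentric subdivision: the faces are the (possibly empty) flags
`∅ ≠ σ₀ ⊊ σ₁ ⊊ ... ⊊ σ_q` of nonempty faces of `K`, a nonempty face `σ` of `K`
becoming the vertex `σ̂ = σ`. By convention `sd ∅ = ∅`. -/
def sd (K : Finset (Finset V)) : Finset (Finset (Finset V)) :=
  if K = ∅ then ∅ else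
    (K.erase ∅).powerset.filter fun c => ∀ a ∈ c, ∀ b ∈ c, a ⊆ b ∨ b ⊆ a

/-- First barycentric subdivision of a relative complex: `sd (K \ L) = sd K \ sd L`. -/
def RelCplx.sdR (S : RelCplx V) : RelCplx (Finset V) := ⟨sd S.K, sd S.L⟩

/-- An (absolute) simplicial complex seen as a relative one. -/
def toRel (K : Finset (Finset V)) : RelCplx V := ⟨K, ∅⟩

/-- The vertex support of a relative complex. -/
def suppK (S : RelCplx V) : Finset V := S.K.sup id

/-- The ridges (codimension one faces) of a simplex. -/
def ridges (σ : Finset V) : Finset (Finset V) := σ.image fun v => σ.erase v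

/-- The subcomplex of the simplex `σ` consisting of the faces contained in some
member of `R`. -/
def below (σ : Finset V) (R : Finset (Finset V)) : Finset (Finset V) :=
  σ.powerset.filter fun τ => ∃ ρ ∈ R, τ ⊆ ρ

/-- The restriction set of the basic tile `σ \ R`: the face spanned by the
vertices opposite to the missing ridges `R`. -/
def restSet (σ : Finset V) (R : Finset (Finset V)) : Finset V :=
  σ.filter fun v => σ.erase v ∈ R

/-- A basic tile of dimension `n` and order `k`: an `n`-simplex deprived of `k`
of its ridges (together with all the faces contained in them). -/
def IsBasicTile (S : RelCplx V) (n k : ℕ) : Prop :=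
  ∃ σ : Finset V, σ.card = n + 1 ∧ S.K = σ.powerset ∧
    ∃ R ⊆ ridges σ, R.card = k ∧ S.L = below σ R

/-- A Morse tile of dimension `n` and order `k`: a basic tile, possibly further
deprived of a unique face of higher codimension (its Morse face). -/
def IsMorseTile (S : RelCplx V) (n k : ℕ) : Prop :=
  ∃ σ : Finset V, σ.card = n + 1 ∧ S.K = σ.powerset ∧
    ∃ R ⊆ ridges σ, R.card = k ∧
      (S.L = below σ R ∨
        ∃ μ ⊆ σ, μ ∉ below σ R ∧ μ.card + 2 ≤ σ.card ∧
          S.L = below σ R ∪ below σ {μ})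

/-- A critical tile of dimension `n` and index `k`: either a closed simplex
(index `0`), or a basic tile of order `k` deprived of its restriction set
(this includes the dotted simplex for `k = 0` and the open simplex for `k = n`). -/
def IsCriticalTile (S : RelCplx V) (n k : ℕ) : Prop :=
  ∃ σ : Finset V, σ.card = n + 1 ∧ S.K = σ.powerset ∧
    ((k = 0 ∧ S.L = ∅) ∨
      (k ≤ n ∧ ∃ R ⊆ ridges σ, R.card = k ∧
        S.L = below σ R ∪ below σ {restSet σ R}))

/-- A closed simplex, as a tile. -/
def IsClosedSimplexTile (S : RelCplx V) : Prop :=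
  ∃ σ : Finset V, S.K = σ.powerset ∧ S.L = ∅

/-- An open simplex, as a tile: deprived of its whole boundary, incl. the empty face. -/
def IsOpenSimplexTile (S : RelCplx V) : Prop :=
  ∃ σ : Finset V, σ ≠ ∅ ∧ S.K = σ.powerset ∧ S.L = σ.powerset.erase σ

/-- The closed simplex on vertex set `σ`, as a relative complex. -/
def closedT (σ : Finset V) : RelCplx V := ⟨σ.powerset, ∅⟩

/-- The open simplex on vertex set `σ`. -/
def openT (σ : Finset V) : RelCplx V := ⟨σ.powerset, σ.powerset.erase σ⟩

/-- The closed simplex deprived of its empty face, `σ̇` (the neutral tile when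
`σ = ∅`, so that empty factors may be dropped from joins). -/
def dotT (σ : Finset V) : RelCplx V := ⟨σ.powerset, if σ = ∅ then ∅ else {∅}⟩

/-- The Morse tile `σ * θ̊ * τ̇`. -/
def splitTile (σ θ τ : Finset V) : RelCplx V :=
  (closedT σ).join ((openT θ).join (dotT τ))

/-- A tiling of a relative simplicial complex by `N` relative facets: the tiles
are relative simplices whose underlying simplices are facets, and their faces
partition the faces of `S`. -/
structure Tiling (S : RelCplx W) (N : ℕ) where
  tile : Fin N → RelCplx W
  isFacet : ∀ i, ∃ σ ∈ S.K, (∀ τ ∈ S.K, σ ⊆ τ → τ = σ) ∧ (tile i).K = σ.powerset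
  subL : ∀ i, (tile i).L ⊆ (tile i).K
  disj : ∀ i j, i ≠ j → Disjoint (tile i).faces (tile j).faces
  cover : (Finset.univ : Finset (Fin N)).biUnion (fun i => (tile i).faces) = S.faces

/-- The union of the faces of the first `p` tiles of a tiling. -/
def Tiling.prefixFaces {S : RelCplx W} {N : ℕ} (T : Tiling S N) (p : ℕ) :
    Finset (Finset W) :=
  (Finset.univ.filter fun i : Fin N => (i : ℕ) < p).biUnion fun i => (T.tile i).faces

/-- A tiling is a shelling when each of the sets of faces of `S_p = K_p \ L`
is a relative subcomplex, i.e. `L ∪ (tiles of index < p)` is a complex. -/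
def Tiling.IsShelling {S : RelCplx W} {N : ℕ} (T : Tiling S N) : Prop :=
  ∀ p ≤ N, IsComplex (S.L ∪ T.prefixFaces p)

/-- A (shelled) tiling begins with a set `F` of faces when some initial segment
of its tiles partitions exactly `F`. -/
def Tiling.BeginsWith {S : RelCplx W} {N : ℕ} (T : Tiling S N)
    (F : Finset (Finset W)) : Prop :=
  ∃ p ≤ N, T.prefixFaces p = F

/-- A Morse tiling: all tiles are Morse tiles. -/
def Tiling.IsMorse {S : RelCplx W} {N : ℕ} (T : Tiling S N) : Prop :=
  ∀ i, ∃ n k, IsMorseTile (T.tile i) n k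

/-- An h-tiling: all tiles are basic or critical tiles. -/
def Tiling.IsH {S : RelCplx W} {N : ℕ} (T : Tiling S N) : Prop :=
  ∀ i, (∃ n k, IsBasicTile (T.tile i) n k) ∨ (∃ n k, IsCriticalTile (T.tile i) n k)

/-- `f` induces a simplicial isomorphism from `A` onto `B` (both viewed through
their collections of faces). -/
def IsSimplicialIso (f : V → W) (A : Finset (Finset V)) (B : Finset (Finset W)) : Prop :=
  Set.BijOn (fun σ : Finset V => σ.image f) ↑A ↑B

/-- `f` induces an isomorphism of relative simplicial complexes. -/
def IsRelIso (f : V → W) (S : RelCplx V) (S' : RelCplx W) : Prop :=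
  Set.BijOn (fun σ : Finset V => σ.image f) ↑S.K ↑S'.K ∧
    Set.BijOn (fun σ : Finset V => σ.image f) ↑S.L ↑S'.L

/-- The first derived neighborhood `N(L, K)` of a subcomplex `L` in `K` : the union
of the stars in `sd K` of the vertices of `L`. -/
def derivedNbhd (L K : Finset (Finset V)) : Finset (Finset (Finset V)) :=
  (L.filter fun s => s.card = 1).biUnion fun s => star (sd K) {s}

/-- The faces of the derived neighborhood `N(T, S)` of a tile `T` in a relative
complex `S`: the union of the relative stars in `sd S` of the vertices of `T`. -/
def relDerivedNbhd (T S : RelCplx V) : Finset (Finset (Finset V)) :=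
  ((suppK T).biUnion fun v => ((S.sdR).starR {({v} : Finset V)}).faces) ∩ (S.sdR).faces

/-- A discrete Morse function on the finite simplicial complex `K`. -/
def IsDiscreteMorse (K : Finset (Finset V)) (f : Finset V → ℝ) : Prop :=
  ∀ σ ∈ K, σ ≠ ∅ →
    (K.filter fun τ => σ ⊂ τ ∧ f τ ≤ f σ).card ≤ 1 ∧
    (K.filter fun θ => θ ≠ ∅ ∧ θ ⊂ σ ∧ f σ ≤ f θ).card ≤ 1

/-- A critical face of a discrete Morse function. -/
def IsCriticalFace (K : Finset (Finset V)) (f : Finset V → ℝ) (σ : Finset V) : Prop :=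
  σ ∈ K ∧ σ ≠ ∅ ∧ (∀ τ ∈ K, σ ⊂ τ → f σ < f τ) ∧
    ∀ θ ∈ K, θ ≠ ∅ → θ ⊂ σ → f θ < f σ

/-- An elementary collapse: removal of a facet `τ` together with a ridge `θ` of it
contained in no other facet. -/
def ElementaryCollapse (K K' : Finset (Finset V)) : Prop :=
  ∃ τ ∈ K, ∃ θ ∈ K, θ ⊆ τ ∧ τ.card = θ.card + 1 ∧
    (∀ ρ ∈ K, τ ⊆ ρ → ρ = τ) ∧
    (∀ ρ ∈ K, θ ⊆ ρ → ρ = θ ∨ ρ = τ) ∧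
    K' = (K.erase τ).erase θ

/-- A finite simplicial complex is collapsible when some finite sequence of
elementary collapses reduces it to a single vertex. -/
def Collapsible (K : Finset (Finset V)) : Prop :=
  ∃ v : V, Relation.ReflTransGen ElementaryCollapse K {∅, {v}}

section Aux

lemma isComplex_powerset (σ : Finset V) : IsComplex σ.powerset := by
  intro a ha b hb
  simp only [Finset.mem_powerset] at *
  exact hb.trans ha

lemma isComplex_empty : IsComplex (∅ : Finset (Finset V)) := by
  intro a ha; simp at ha

lemma isComplex_singleton_empty : IsComplex ({∅} : Finset (Finset V)) := by
  intro a ha b hb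
  simp only [Finset.mem_singleton] at *
  subst ha
  exact Finset.subset_empty.1 hb

lemma isComplex_boundary (σ : Finset V) : IsComplex (σ.powerset.erase σ) := by
  intro a ha b hb
  simp only [Finset.mem_erase, Finset.mem_powerset] at *
  refine ⟨?_, hb.trans ha.2⟩
  rintro rfl
  exact ha.1 (Finset.Subset.antisymm ha.2 hb)

lemma isComplex_union {K₁ K₂ : Finset (Finset V)} (h₁ : IsComplex K₁) (h₂ : IsComplex K₂) :
    IsComplex (K₁ ∪ K₂) := by
  intro a ha b hb
  rcases Finset.mem_union.1 ha with h | h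
  · exact Finset.mem_union.2 (Or.inl (h₁ a h b hb))
  · exact Finset.mem_union.2 (Or.inr (h₂ a h b hb))

lemma isComplex_joinF {K₁ K₂ : Finset (Finset V)} (h₁ : IsComplex K₁) (h₂ : IsComplex K₂) :
    IsComplex (joinF K₁ K₂) := by
  intro μ hμ ν hν
  simp only [joinF, Finset.mem_image, Finset.mem_product, Prod.exists] at hμ ⊢
  obtain ⟨a, b, ⟨ha, hb⟩, rfl⟩ := hμ
  refine ⟨ν ∩ a, ν ∩ b, ⟨h₁ a ha _ Finset.inter_subset_right,
    h₂ b hb _ Finset.inter_subset_right⟩, ?_⟩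
  rw [← Finset.inter_union_distrib_left]
  exact Finset.inter_eq_left.2 hν

lemma isComplex_splitTile_K (σ θ τ : Finset V) : IsComplex (splitTile σ θ τ).K :=
  isComplex_joinF (isComplex_powerset σ)
    (isComplex_joinF (isComplex_powerset θ) (isComplex_powerset τ))

lemma isComplex_splitTile_L (σ θ τ : Finset V) : IsComplex (splitTile σ θ τ).L := by
  refine isComplex_union ?_ (isComplex_joinF (isComplex_powerset σ) (isComplex_union ?_ ?_))
  · exact isComplex_joinF isComplex_empty
      (isComplex_joinF (isComplex_powerset θ) (isComplex_powerset τ))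
  · exact isComplex_joinF (isComplex_boundary θ) (isComplex_powerset τ)
  · refine isComplex_joinF (isComplex_powerset θ) ?_
    simp only [dotT]
    split_ifs
    · exact isComplex_empty
    · exact isComplex_singleton_empty

lemma mem_sd_iff {M : Finset (Finset V)} {c : Finset (Finset V)} :
    c ∈ sd M ↔ M ≠ ∅ ∧ (∀ a ∈ c, a ∈ M ∧ a ≠ ∅) ∧
      ∀ a ∈ c, ∀ b ∈ c, a ⊆ b ∨ b ⊆ a := by
  unfold sd
  split_ifs with h
  · simp [h]
  · simp only [Finset.mem_filter, Finset.mem_powerset, h, not_false_iff, true_and, ne_eq]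
    constructor
    · rintro ⟨hsub, hch⟩
      exact ⟨fun a ha => ⟨(Finset.mem_erase.1 (hsub ha)).2, (Finset.mem_erase.1 (hsub ha)).1⟩, hch⟩
    · rintro ⟨h1, hch⟩
      exact ⟨fun a ha => Finset.mem_erase.2 ⟨(h1 a ha).2, (h1 a ha).1⟩, hch⟩

lemma sd_link_bijOn (L : Finset (Finset V)) (hL : IsComplex L) (v : V) :
    Set.BijOn (fun c : Finset (Finset V) => c.image (insert v))
      ↑(sd (link L {v})) ↑(link (sd L) {({v} : Finset V)}) := by
  -- characterization of the source
  have hsrc : ∀ c : Finset (Finset V), c ∈ sd (link L {v}) ↔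
      {v} ∈ L ∧ (∀ a ∈ c, a ≠ ∅ ∧ v ∉ a ∧ insert v a ∈ L) ∧
        ∀ a ∈ c, ∀ b ∈ c, a ⊆ b ∨ b ⊆ a := by
    intro c
    rw [mem_sd_iff]
    constructor
    · rintro ⟨hne, h1, hch⟩
      have hvL : {v} ∈ L := by
        obtain ⟨l, hl⟩ := Finset.nonempty_iff_ne_empty.2 hne
        simp only [link, Finset.mem_filter] at hl
        exact hL _ hl.2.1 _ Finset.subset_union_left
      refine ⟨hvL, fun a ha => ?_, hch⟩
      obtain ⟨haL, hane⟩ := h1 a ha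
      simp only [link, Finset.mem_filter] at haL
      refine ⟨hane, ?_, by rw [Finset.insert_eq]; exact haL.2.1⟩
      intro hva
      have h2 := haL.2.2
      rw [Finset.singleton_inter_of_mem hva] at h2
      exact absurd h2 (by simp)
    · rintro ⟨hvL, h1, hch⟩
      refine ⟨?_, fun a ha => ?_, hch⟩
      · intro hemp
        have hmem : (∅ : Finset V) ∈ link L {v} := by
          simp only [link, Finset.mem_filter, Finset.union_empty, Finset.inter_empty]
          exact ⟨hL _ hvL ∅ (Finset.empty_subset _), hvL, trivial⟩
        rw [hemp] at hmem
        simp at hmem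
      · obtain ⟨hane, hva, hins⟩ := h1 a ha
        refine ⟨?_, hane⟩
        simp only [link, Finset.mem_filter]
        exact ⟨hL _ hins a (Finset.subset_insert v a),
          by rw [← Finset.insert_eq]; exact hins,
          Finset.singleton_inter_of_notMem hva⟩
  -- characterization of the target
  have htgt : ∀ c : Finset (Finset V), c ∈ link (sd L) {({v} : Finset V)} ↔
      {v} ∈ L ∧ (∀ b ∈ c, b ∈ L ∧ v ∈ b ∧ b ≠ {v}) ∧
        ∀ a ∈ c, ∀ b ∈ c, a ⊆ b ∨ b ⊆ a := by
    intro c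
    simp only [link, Finset.mem_filter]
    simp only [← Finset.insert_eq]
    constructor
    · rintro ⟨hc, hins, hdisj⟩
      rw [mem_sd_iff] at hins
      obtain ⟨hLne, h1, hch⟩ := hins
      have hvnotc : {v} ∉ c := by
        intro hvc
        have := Finset.singleton_inter_of_mem hvc
        rw [this] at hdisj
        simp at hdisj
      have hvL : {v} ∈ L := (h1 _ (Finset.mem_insert_self _ _)).1
      refine ⟨hvL, fun b hb => ?_, fun a ha b hb =>
        hch a (Finset.mem_insert_of_mem ha) b (Finset.mem_insert_of_mem hb)⟩
      obtain ⟨hbL, hbne⟩ := h1 b (Finset.mem_insert_of_mem hb)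
      have hcomp := hch {v} (Finset.mem_insert_self _ _) b (Finset.mem_insert_of_mem hb)
      have hbnev : b ≠ {v} := fun h => hvnotc (h ▸ hb)
      refine ⟨hbL, ?_, hbnev⟩
      rcases hcomp with h | h
      · exact h (Finset.mem_singleton_self v)
      · rcases Finset.subset_singleton_iff.1 h with h' | h'
        · exact absurd h' hbne
        · exact absurd h' hbnev
    · rintro ⟨hvL, h1, hch⟩
      have hLne : L ≠ ∅ := fun h => by simp [h] at hvL
      have hvnotc : {v} ∉ c := fun hvc => (h1 _ hvc).2.2 rfl
      have hbne : ∀ b ∈ c, b ≠ ∅ := fun b hb h => by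
        have := (h1 b hb).2.1; rw [h] at this; simp at this
      refine ⟨?_, ?_, ?_⟩
      · rw [mem_sd_iff]
        exact ⟨hLne, fun a ha => ⟨(h1 a ha).1, hbne a ha⟩, hch⟩
      · rw [mem_sd_iff]
        refine ⟨hLne, fun a ha => ?_, fun a ha b hb => ?_⟩
        · rcases Finset.mem_insert.1 ha with rfl | ha'
          · exact ⟨hvL, by simp⟩
          · exact ⟨(h1 a ha').1, hbne a ha'⟩
        · rcases Finset.mem_insert.1 ha with rfl | ha' <;>
            rcases Finset.mem_insert.1 hb with rfl | hb'
          · exact Or.inl (Finset.Subset.refl _)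
          · exact Or.inl (Finset.singleton_subset_iff.2 (h1 b hb').2.1)
          · exact Or.inr (Finset.singleton_subset_iff.2 (h1 a ha').2.1)
          · exact hch a ha' b hb'
      · exact Finset.singleton_inter_of_notMem hvnotc
  constructor
  · -- MapsTo
    intro c hc
    simp only [Finset.mem_coe] at hc ⊢
    rw [hsrc] at hc
    obtain ⟨hvL, h1, hch⟩ := hc
    rw [htgt]
    refine ⟨hvL, fun b hb => ?_, fun a ha b hb => ?_⟩
    · obtain ⟨a, ha, rfl⟩ := Finset.mem_image.1 hb
      obtain ⟨hane, hva, hins⟩ := h1 a ha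
      refine ⟨hins, Finset.mem_insert_self _ _, ?_⟩
      intro h
      obtain ⟨w, hw⟩ := Finset.nonempty_iff_ne_empty.2 hane
      have hwv : w ∈ ({v} : Finset V) := h ▸ Finset.mem_insert_of_mem hw
      rw [Finset.mem_singleton] at hwv
      exact hva (hwv ▸ hw)
    · obtain ⟨a', ha', rfl⟩ := Finset.mem_image.1 ha
      obtain ⟨b', hb', rfl⟩ := Finset.mem_image.1 hb
      rcases hch a' ha' b' hb' with h | h
      · exact Or.inl (Finset.insert_subset_insert v h)
      · exact Or.inr (Finset.insert_subset_insert v h)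
  constructor
  · -- InjOn
    intro c hc c' hc' heq
    simp only [Finset.mem_coe] at hc hc'
    rw [hsrc] at hc hc'
    have key : ∀ d : Finset (Finset V), (∀ a ∈ d, v ∉ a) →
        (d.image (insert v)).image (Finset.erase · v) = d := by
      intro d hd
      ext a
      simp only [Finset.mem_image]
      constructor
      · rintro ⟨b, ⟨x, hx, rfl⟩, rfl⟩
        rwa [Finset.erase_insert (hd x hx)]
      · intro ha
        exact ⟨insert v a, ⟨a, ha, rfl⟩, Finset.erase_insert (hd a ha)⟩
    have h1 := key c (fun a ha => (hc.2.1 a ha).2.1)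
    have h2 := key c' (fun a ha => (hc'.2.1 a ha).2.1)
    have heq' : Finset.image (insert v) c = Finset.image (insert v) c' := heq
    rw [← h1, ← h2, heq']
  · -- SurjOn
    intro c hc
    simp only [Finset.mem_coe] at hc
    rw [htgt] at hc
    obtain ⟨hvL, h1, hch⟩ := hc
    refine ⟨c.image (Finset.erase · v), ?_, ?_⟩
    · simp only [Finset.mem_coe]
      rw [hsrc]
      refine ⟨hvL, fun a ha => ?_, fun a ha b hb => ?_⟩
      · obtain ⟨b, hb, rfl⟩ := Finset.mem_image.1 ha
        obtain ⟨hbL, hvb, hbnev⟩ := h1 b hb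
        have hins : insert v (b.erase v) = b := Finset.insert_erase hvb
        refine ⟨?_, Finset.notMem_erase v b, hins.symm ▸ hbL⟩
        intro h
        apply hbnev
        have hb2 : b = insert v (b.erase v) := hins.symm
        rw [h] at hb2
        simpa using hb2
      · obtain ⟨a', ha', rfl⟩ := Finset.mem_image.1 ha
        obtain ⟨b', hb', rfl⟩ := Finset.mem_image.1 hb
        rcases hch a' ha' b' hb' with h | h
        · exact Or.inl (Finset.erase_subset_erase v h)
        · exact Or.inr (Finset.erase_subset_erase v h)
    · show Finset.image (insert v) (c.image (Finset.erase · v)) = c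
      ext b
      simp only [Finset.mem_image]
      constructor
      · rintro ⟨a, ⟨x, hx, rfl⟩, rfl⟩
        rwa [Finset.insert_erase (h1 x hx).2.1]
      · intro hb
        exact ⟨b.erase v, ⟨b, hb, rfl⟩, Finset.insert_erase (h1 b hb).2.1⟩

end Aux

/-- **Corollary.** For every vertex `v` of the simplex underlying the Morse tile
`T = σ * θ̊ * τ̇`, the map `λ ∈ lk_T(v) ↦ v * λ` induces an isomorphism of
relative simplicial complexes `sd(lk_T(v)) → lk_{sd T}(v̂)`. -/
theorem link_in_sd_of_morse_tile
    {V : Type*} [DecidableEq V] (σ θ τ : Finset V)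
    (h₁ : Disjoint σ θ) (h₂ : Disjoint σ τ) (h₃ : Disjoint θ τ)
    (hdim : τ = ∅ ∨ 2 ≤ τ.card) (v : V) (hv : v ∈ σ ∪ θ ∪ τ) :
    IsRelIso (fun μ : Finset V => insert v μ)
      (((splitTile σ θ τ).linkR {v}).sdR)
      (((splitTile σ θ τ).sdR).linkR {({v} : Finset V)}) := by
  exact ⟨sd_link_bijOn _ (isComplex_splitTile_K σ θ τ) v,
    sd_link_bijOn _ (isComplex_splitTile_L σ θ τ) v⟩

end MorseShelling
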